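/- Let A ∈ M_d(ℝ), B ∈ M_{d×k}(ℝ), let Σ ∈ M_k(ℝ) be symmetric positive semidefinite, and let u, v ∈ ℝᵈ. Then ∫_0^{min(h,ĥ)} uᵀ·exp((h−s)A)·B·Σ·Bᵀ·exp((ĥ−s)Aᵀ)·v ds = 0 for all h, ĥ ∈ [0,1] if and only if uᵀ·Aᵅ·B·Σ·Bᵀ·(Aᵀ)ᵝ·v = 0 for all integers 0 ≤ α, β ≤ d−1. -/

import Mathlib

open Matrix NormedSpace

private def qlin {d : ℕ} (u v : Fin d → ℝ) : Matrix (Fin d) (Fin d) ℝ →ₗ[ℝ] ℝ where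
  toFun X := u ⬝ᵥ X.mulVec v
  map_add' X Y := by simp [Matrix.add_mulVec, dotProduct_add]
  map_smul' c X := by simp [Matrix.smul_mulVec, dotProduct_smul]

private theorem quad_exp_hasDerivAt {d : ℕ} (u v : Fin d → ℝ)
    (C₁ C₂ A₀ : Matrix (Fin d) (Fin d) ℝ) (s : ℝ) :
    HasDerivAt (fun r : ℝ => u ⬝ᵥ ((C₁ * exp (r • A₀) * C₂).mulVec v))
      (u ⬝ᵥ ((C₁ * (exp (s • A₀) * A₀) * C₂).mulVec v)) s := by
  letI : NormedRing (Matrix (Fin d) (Fin d) ℝ) := Matrix.linftyOpNormedRing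
  letI : NormedAlgebra ℝ (Matrix (Fin d) (Fin d) ℝ) := Matrix.linftyOpNormedAlgebra
  have h1 : HasDerivAt (fun r : ℝ => C₁ * exp (r • A₀) * C₂)
      (C₁ * (exp (s • A₀) * A₀) * C₂) s :=
    ((hasDerivAt_exp_smul_const A₀ s).const_mul C₁).mul_const C₂
  exact ((qlin u v).toContinuousLinearMap.hasFDerivAt.comp_hasDerivAt s h1 :)

private theorem quad_exp_continuous {d : ℕ} (u v : Fin d → ℝ)
    (C₁ C₂ C₃ A₀ A₁ : Matrix (Fin d) (Fin d) ℝ) {f g : ℝ → ℝ}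
    (hf : Continuous f) (hg : Continuous g) :
    Continuous (fun r : ℝ =>
      u ⬝ᵥ ((C₁ * exp (f r • A₀) * C₂ * exp (g r • A₁) * C₃).mulVec v)) := by
  letI : NormedRing (Matrix (Fin d) (Fin d) ℝ) := Matrix.linftyOpNormedRing
  letI : NormedAlgebra ℝ (Matrix (Fin d) (Fin d) ℝ) := Matrix.linftyOpNormedAlgebra
  have h1 : Continuous (fun r : ℝ =>
      C₁ * exp (f r • A₀) * C₂ * exp (g r • A₁) * C₃) := by
    have e0 : Continuous (exp : Matrix (Fin d) (Fin d) ℝ → _) :=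
      continuous_iff_continuousAt.2 fun x => (exp_analytic (𝕂 := ℝ) x).continuousAt
    fun_prop
  exact ((qlin u v).toContinuousLinearMap.continuous.comp h1 :)

private theorem pow_mem_span_powers {d : ℕ} (A : Matrix (Fin d) (Fin d) ℝ) (n : ℕ) :
    A ^ n ∈ Submodule.span ℝ {X : Matrix (Fin d) (Fin d) ℝ | ∃ i < d, X = A ^ i} := by
  induction n using Nat.strong_induction_on with
  | _ n ih =>
    by_cases hn : n < d
    · exact Submodule.subset_span ⟨n, hn, rfl⟩
    · push_neg at hn
      have hch := A.aeval_self_charpoly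
      rw [Polynomial.aeval_eq_sum_range] at hch
      have hdeg : A.charpoly.natDegree = d := by
        rw [Matrix.charpoly_natDegree_eq_dim, Fintype.card_fin]
      rw [hdeg, Finset.sum_range_succ] at hch
      have hlead : A.charpoly.coeff d = 1 := by
        have h := A.charpoly_monic
        have h2 := h.coeff_natDegree
        rwa [hdeg] at h2
      rw [hlead, one_smul] at hch
      have hAd : A ^ d = ∑ i ∈ Finset.range d, (-A.charpoly.coeff i) • A ^ i := by
        have h2 : A ^ d = -(∑ i ∈ Finset.range d, A.charpoly.coeff i • A ^ i) := by
          linear_combination (norm := module) hch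
        rw [h2, ← Finset.sum_neg_distrib]
        exact Finset.sum_congr rfl fun i _ => (neg_smul _ _).symm
      have hsplit : A ^ n = ∑ i ∈ Finset.range d, (-A.charpoly.coeff i) • A ^ (n - d + i) := by
        calc A ^ n = A ^ (n - d) * A ^ d := by rw [← pow_add]; congr 1; omega
          _ = ∑ i ∈ Finset.range d, (-A.charpoly.coeff i) • (A ^ (n - d) * A ^ i) := by
              rw [hAd, Finset.mul_sum]
              exact Finset.sum_congr rfl fun i _ => Matrix.mul_smul _ _ _
          _ = _ := Finset.sum_congr rfl fun i _ => by rw [← pow_add]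
      rw [hsplit]
      exact Submodule.sum_mem _ fun i hi =>
        Submodule.smul_mem _ _ (ih _ (by have := Finset.mem_range.mp hi; omega))

private theorem exp_mem_span_powers {d : ℕ} (A : Matrix (Fin d) (Fin d) ℝ) (s : ℝ) :
    exp (s • A) ∈ Submodule.span ℝ {X : Matrix (Fin d) (Fin d) ℝ | ∃ i < d, X = A ^ i} := by
  letI : NormedRing (Matrix (Fin d) (Fin d) ℝ) := Matrix.linftyOpNormedRing
  letI : NormedAlgebra ℝ (Matrix (Fin d) (Fin d) ℝ) := Matrix.linftyOpNormedAlgebra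
  set W := Submodule.span ℝ {X : Matrix (Fin d) (Fin d) ℝ | ∃ i < d, X = A ^ i}
  have hs : Summable (fun n : ℕ => (n.factorial : ℝ)⁻¹ • (s • A) ^ n) :=
    expSeries_summable' (𝕂 := ℝ) (s • A)
  have hcl : IsClosed (W : Set (Matrix (Fin d) (Fin d) ℝ)) :=
    Submodule.closed_of_finiteDimensional W
  have hexp : exp (s • A) = ∑' n : ℕ, (n.factorial : ℝ)⁻¹ • (s • A) ^ n := by
    rw [exp_eq_tsum (𝕂 := ℝ)]
  rw [hexp]
  refine hcl.mem_of_tendsto hs.hasSum.tendsto_sum_nat (Filter.Eventually.of_forall fun N => ?_)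
  refine Submodule.sum_mem _ fun i _ => ?_
  rw [smul_pow]
  exact Submodule.smul_mem _ _ (Submodule.smul_mem _ _ (pow_mem_span_powers A i))

/-- The integral characterisation of contemporaneous uncorrelatedness:
`∫_0^{min(h,ĥ)} uᵀ e^{(h−s)A} B Σ Bᵀ e^{(ĥ−s)Aᵀ} v ds = 0` for all `h, ĥ ∈ [0,1]` if and
only if `uᵀ Aᵅ B Σ Bᵀ (Aᵀ)ᵝ v = 0` for all `0 ≤ α, β ≤ d−1`. -/
theorem covariance_integral_zero_iff_powers {d k : ℕ}
    (A : Matrix (Fin d) (Fin d) ℝ) (B : Matrix (Fin d) (Fin k) ℝ)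
    (Sig : Matrix (Fin k) (Fin k) ℝ) (hSig : Sig.PosSemidef)
    (u v : Fin d → ℝ) :
    (∀ h ∈ Set.Icc (0 : ℝ) 1, ∀ h' ∈ Set.Icc (0 : ℝ) 1,
        ∫ s in (0 : ℝ)..(min h h'),
          u ⬝ᵥ ((exp ((h - s) • A) * B * Sig * Bᵀ * exp ((h' - s) • Aᵀ)).mulVec v) = 0) ↔
      (∀ α < d, ∀ β < d, u ⬝ᵥ ((A ^ α * B * Sig * Bᵀ * (Aᵀ) ^ β).mulVec v) = 0) := by
  set M : Matrix (Fin d) (Fin d) ℝ := B * Sig * Bᵀ with hM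
  constructor
  · intro hInt α hα β hβ
    -- Step 1a: vanishing along lines t = s + δ
    have key0 : ∀ δ ∈ Set.Icc (0:ℝ) 1, ∀ x ∈ Set.Ioo (0:ℝ) (1 - δ),
        u ⬝ᵥ ((exp (x • A) * M * exp ((x + δ) • Aᵀ)).mulVec v) = 0 := by
      intro δ hδ x hx
      set g : ℝ → ℝ :=
        fun r => u ⬝ᵥ ((exp (r • A) * M * exp ((r + δ) • Aᵀ)).mulVec v) with hg_def
      have hg : Continuous g := by
        have := quad_exp_continuous u v 1 M 1 A Aᵀ (f := fun r => r)
          (g := fun r => r + δ) continuous_id' (by fun_prop)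
        simpa [hg_def] using this
      have hF : ∀ b ∈ Set.Icc (0:ℝ) (1 - δ), ∫ s in (0:ℝ)..b, g s = 0 := by
        intro b hb
        have h1 : b ∈ Set.Icc (0:ℝ) 1 := ⟨hb.1, by linarith [hδ.1, hb.2]⟩
        have h2 : b + δ ∈ Set.Icc (0:ℝ) 1 := ⟨by linarith [hδ.1, hb.1], by linarith [hb.2]⟩
        have hI := hInt b h1 (b + δ) h2
        rw [min_eq_left (by linarith [hδ.1] : b ≤ b + δ)] at hI
        have hfun : ∀ s : ℝ,
            u ⬝ᵥ ((exp ((b - s) • A) * B * Sig * Bᵀ *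
              exp ((b + δ - s) • Aᵀ)).mulVec v) = g (b - s) := by
          intro s
          rw [show b + δ - s = (b - s) + δ by ring]
          simp only [hg_def, hM, Matrix.mul_assoc]
        simp only [hfun] at hI
        rw [intervalIntegral.integral_comp_sub_left g b] at hI
        simpa using hI
      have hFd : HasDerivAt (fun b => ∫ s in (0:ℝ)..b, g s) (g x) x :=
        intervalIntegral.integral_hasDerivAt_right (hg.intervalIntegrable _ _)
          (hg.stronglyMeasurableAtFilter _ _) hg.continuousAt
      have hev : (fun b => ∫ s in (0:ℝ)..b, g s) =ᶠ[nhds x] (fun _ => (0:ℝ)) := by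
        filter_upwards [Ioo_mem_nhds hx.1 hx.2] with y hy
        exact hF y ⟨le_of_lt hy.1, le_of_lt hy.2⟩
      have h0 : HasDerivAt (fun _ : ℝ => (0:ℝ)) (g x) x := by
        rwa [Filter.EventuallyEq.hasDerivAt_iff hev] at hFd
      have hz := (hasDerivAt_const x (0:ℝ)).unique h0
      simpa [hg_def] using hz.symm
    -- Step 1b: vanishing along lines s = t + δ
    have key0' : ∀ δ ∈ Set.Icc (0:ℝ) 1, ∀ x ∈ Set.Ioo (0:ℝ) (1 - δ),
        u ⬝ᵥ ((exp ((x + δ) • A) * M * exp (x • Aᵀ)).mulVec v) = 0 := by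
      intro δ hδ x hx
      set g : ℝ → ℝ :=
        fun r => u ⬝ᵥ ((exp ((r + δ) • A) * M * exp (r • Aᵀ)).mulVec v) with hg_def
      have hg : Continuous g := by
        have := quad_exp_continuous u v 1 M 1 A Aᵀ (f := fun r => r + δ)
          (g := fun r => r) (by fun_prop) continuous_id'
        simpa [hg_def] using this
      have hF : ∀ b ∈ Set.Icc (0:ℝ) (1 - δ), ∫ s in (0:ℝ)..b, g s = 0 := by
        intro b hb
        have h1 : b + δ ∈ Set.Icc (0:ℝ) 1 := ⟨by linarith [hδ.1, hb.1], by linarith [hb.2]⟩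
        have h2 : b ∈ Set.Icc (0:ℝ) 1 := ⟨hb.1, by linarith [hδ.1, hb.2]⟩
        have hI := hInt (b + δ) h1 b h2
        rw [min_eq_right (by linarith [hδ.1] : b ≤ b + δ)] at hI
        have hfun : ∀ s : ℝ,
            u ⬝ᵥ ((exp ((b + δ - s) • A) * B * Sig * Bᵀ *
              exp ((b - s) • Aᵀ)).mulVec v) = g (b - s) := by
          intro s
          rw [show b + δ - s = (b - s) + δ by ring]
          simp only [hg_def, hM, Matrix.mul_assoc]
        simp only [hfun] at hI
        rw [intervalIntegral.integral_comp_sub_left g b] at hI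
        simpa using hI
      have hFd : HasDerivAt (fun b => ∫ s in (0:ℝ)..b, g s) (g x) x :=
        intervalIntegral.integral_hasDerivAt_right (hg.intervalIntegrable _ _)
          (hg.stronglyMeasurableAtFilter _ _) hg.continuousAt
      have hev : (fun b => ∫ s in (0:ℝ)..b, g s) =ᶠ[nhds x] (fun _ => (0:ℝ)) := by
        filter_upwards [Ioo_mem_nhds hx.1 hx.2] with y hy
        exact hF y ⟨le_of_lt hy.1, le_of_lt hy.2⟩
      have h0 : HasDerivAt (fun _ : ℝ => (0:ℝ)) (g x) x := by
        rwa [Filter.EventuallyEq.hasDerivAt_iff hev] at hFd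
      have hz := (hasDerivAt_const x (0:ℝ)).unique h0
      simpa [hg_def] using hz.symm
    -- Step 2: vanishing on the open square
    have key : ∀ s ∈ Set.Ioo (0:ℝ) 1, ∀ t ∈ Set.Ioo (0:ℝ) 1,
        u ⬝ᵥ ((exp (s • A) * M * exp (t • Aᵀ)).mulVec v) = 0 := by
      intro s hs t ht
      rcases le_total s t with hst | hst
      · have hδ : t - s ∈ Set.Icc (0:ℝ) 1 := ⟨by linarith, by linarith [hs.1, ht.2]⟩
        have hx : s ∈ Set.Ioo (0:ℝ) (1 - (t - s)) := ⟨hs.1, by linarith [ht.2]⟩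
        have h := key0 (t - s) hδ s hx
        rwa [show s + (t - s) = t by ring] at h
      · have hδ : s - t ∈ Set.Icc (0:ℝ) 1 := ⟨by linarith, by linarith [ht.1, hs.2]⟩
        have hx : t ∈ Set.Ioo (0:ℝ) (1 - (s - t)) := ⟨ht.1, by linarith [hs.2]⟩
        have h := key0' (s - t) hδ t hx
        rwa [show t + (s - t) = s by ring] at h
    -- Step 3: bootstrap the left power
    have claim2 : ∀ n : ℕ, ∀ s ∈ Set.Ioo (0:ℝ) 1, ∀ t ∈ Set.Ioo (0:ℝ) 1,
        u ⬝ᵥ ((A ^ n * exp (s • A) * M * exp (t • Aᵀ)).mulVec v) = 0 := by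
      intro n
      induction n with
      | zero => intro s hs t ht; simpa using key s hs t ht
      | succ n ihn =>
        intro s hs t ht
        have hder := quad_exp_hasDerivAt u v (A ^ n) (M * exp (t • Aᵀ)) A s
        have hfun : (fun r : ℝ =>
            u ⬝ᵥ ((A ^ n * exp (r • A) * (M * exp (t • Aᵀ))).mulVec v))
            = fun r : ℝ =>
            u ⬝ᵥ ((A ^ n * exp (r • A) * M * exp (t • Aᵀ)).mulVec v) := by
          funext r
          rw [Matrix.mul_assoc (A ^ n * exp (r • A)) M (exp (t • Aᵀ))]
        rw [hfun] at hder
        have hev : (fun r : ℝ =>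
            u ⬝ᵥ ((A ^ n * exp (r • A) * M * exp (t • Aᵀ)).mulVec v))
            =ᶠ[nhds s] fun _ => (0:ℝ) := by
          filter_upwards [Ioo_mem_nhds hs.1 hs.2] with y hy
          exact ihn y hy t ht
        have h0 : HasDerivAt (fun _ : ℝ => (0:ℝ))
            (u ⬝ᵥ ((A ^ n * (exp (s • A) * A) * (M * exp (t • Aᵀ))).mulVec v)) s := by
          rwa [Filter.EventuallyEq.hasDerivAt_iff hev] at hder
        have hz := (hasDerivAt_const s (0:ℝ)).unique h0
        have hcom : exp (s • A) * A = A * exp (s • A) :=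
          (((Commute.refl A).smul_right s).exp_right).eq.symm
        have heq : A ^ (n + 1) * exp (s • A) * M * exp (t • Aᵀ)
            = A ^ n * (exp (s • A) * A) * (M * exp (t • Aᵀ)) := by
          rw [hcom, pow_succ]
          simp only [Matrix.mul_assoc]
        rw [heq]
        exact hz.symm
    -- Step 4: bootstrap the right power
    have claim3 : ∀ m : ℕ, ∀ n : ℕ, ∀ s ∈ Set.Ioo (0:ℝ) 1, ∀ t ∈ Set.Ioo (0:ℝ) 1,
        u ⬝ᵥ ((A ^ n * exp (s • A) * M * exp (t • Aᵀ) * Aᵀ ^ m).mulVec v) = 0 := by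
      intro m
      induction m with
      | zero => intro n s hs t ht; simpa using claim2 n s hs t ht
      | succ m ihm =>
        intro n s hs t ht
        have hder := quad_exp_hasDerivAt u v (A ^ n * exp (s • A) * M) (Aᵀ ^ m) Aᵀ t
        have hev : (fun r : ℝ =>
            u ⬝ᵥ ((A ^ n * exp (s • A) * M * exp (r • Aᵀ) * Aᵀ ^ m).mulVec v))
            =ᶠ[nhds t] fun _ => (0:ℝ) := by
          filter_upwards [Ioo_mem_nhds ht.1 ht.2] with y hy
          exact ihm n s hs y hy
        have h0 : HasDerivAt (fun _ : ℝ => (0:ℝ))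
            (u ⬝ᵥ ((A ^ n * exp (s • A) * M * (exp (t • Aᵀ) * Aᵀ) * Aᵀ ^ m).mulVec v))
            t := by
          rwa [Filter.EventuallyEq.hasDerivAt_iff hev] at hder
        have hz := (hasDerivAt_const t (0:ℝ)).unique h0
        have heq : A ^ n * exp (s • A) * M * exp (t • Aᵀ) * Aᵀ ^ (m + 1)
            = A ^ n * exp (s • A) * M * (exp (t • Aᵀ) * Aᵀ) * Aᵀ ^ m := by
          rw [pow_succ']
          simp only [Matrix.mul_assoc]
        rw [heq]
        exact hz.symm
    -- Step 5: pass to the limit s = t = 0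
    have h4 : Set.EqOn
        (fun x : ℝ =>
          u ⬝ᵥ ((A ^ α * exp (x • A) * M * exp (x • Aᵀ) * Aᵀ ^ β).mulVec v))
        (fun _ => (0:ℝ)) (Set.Ioo (0:ℝ) 1) := fun x hx => claim3 β α x hx x hx
    have hgc : Continuous (fun x : ℝ =>
        u ⬝ᵥ ((A ^ α * exp (x • A) * M * exp (x • Aᵀ) * Aᵀ ^ β).mulVec v)) :=
      quad_exp_continuous u v (A ^ α) M (Aᵀ ^ β) A Aᵀ (f := fun r => r)
        (g := fun r => r) continuous_id' continuous_id'
    have h5 := h4.closure hgc continuous_const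
    rw [closure_Ioo (by norm_num : (0:ℝ) ≠ 1)] at h5
    have h6 := h5 (Set.mem_Icc.mpr ⟨le_refl 0, zero_le_one⟩)
    simp only [zero_smul, exp_zero, Matrix.mul_one, Matrix.one_mul] at h6
    simpa only [hM, Matrix.mul_assoc] using h6
  · -- reverse direction
    intro hpow h hh h' hh'
    have hgen : ∀ X Y : Matrix (Fin d) (Fin d) ℝ,
        X ∈ Submodule.span ℝ {X : Matrix (Fin d) (Fin d) ℝ | ∃ i < d, X = A ^ i} →
        Y ∈ Submodule.span ℝ {Y : Matrix (Fin d) (Fin d) ℝ | ∃ j < d, Y = Aᵀ ^ j} →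
        u ⬝ᵥ ((X * M * Y).mulVec v) = 0 := by
      intro X Y hX hY
      refine Submodule.span_induction
        (p := fun X _ => u ⬝ᵥ ((X * M * Y).mulVec v) = 0) ?_ ?_ ?_ ?_ hX
      · rintro X' ⟨i, hi, rfl⟩
        refine Submodule.span_induction
          (p := fun Y _ => u ⬝ᵥ ((A ^ i * M * Y).mulVec v) = 0) ?_ ?_ ?_ ?_ hY
        · rintro Y' ⟨j, hj, rfl⟩
          have := hpow i hi j hj
          simpa only [hM, Matrix.mul_assoc] using this
        · simp
        · intro y z _ _ py pz
          rw [Matrix.mul_add, Matrix.add_mulVec, dotProduct_add, py, pz, add_zero]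
        · intro c y _ py
          rw [Matrix.mul_smul, Matrix.smul_mulVec, dotProduct_smul, py, smul_zero]
      · simp
      · intro x y _ _ px py
        rw [Matrix.add_mul, Matrix.add_mul, Matrix.add_mulVec, dotProduct_add, px, py,
          add_zero]
      · intro c x _ px
        rw [Matrix.smul_mul, Matrix.smul_mul, Matrix.smul_mulVec, dotProduct_smul, px,
          smul_zero]
    have hzero : ∀ s : ℝ,
        u ⬝ᵥ ((exp ((h - s) • A) * B * Sig * Bᵀ * exp ((h' - s) • Aᵀ)).mulVec v) = 0 := by
      intro s
      have := hgen _ _ (exp_mem_span_powers A (h - s)) (exp_mem_span_powers Aᵀ (h' - s))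
      simpa only [hM, Matrix.mul_assoc] using this
    simp only [hzero, intervalIntegral.integral_zero]
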